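/- Let G be a linearly ordered group and let a, b, c, d be elements of the positive cone of G (i.e., 1 ≤ a, b, c, d). Then: (i) if a < c, the equation (a,b) = (c,d)·(x,y) has no solution (x,y) in 𝓑⁺(G); (ii) if a > c, the equation (a,b) = (c,d)·(x,y) has the unique solution (x,y) = (a·c⁻¹·d, b) in 𝓑⁺(G); (iii) if b < d, the equation (a,b) = (x,y)·(c,d) has no solution (x,y) in 𝓑⁺(G); (iv) if b > d, the equation (a,b) = (x,y)·(c,d) has the unique solution (x,y) = (a, b·d⁻¹·c) in 𝓑⁺(G). -/

import Mathlib

/-- The multiplication of the bicyclic extension `𝓑(G) = G × G` of a linearly ordered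
group `G`: `(a,b)·(c,d) = (c·b⁻¹·a, d)` if `b < c`; `(a,d)` if `b = c`;
`(a, b·c⁻¹·d)` if `b > c`. -/
def bmul {G : Type*} [Group G] [LinearOrder G] (s t : G × G) : G × G :=
  if s.2 < t.1 then (t.1 * s.2⁻¹ * s.1, t.2)
  else if s.2 = t.1 then (s.1, t.2)
  else (s.1, s.2 * t.1⁻¹ * t.2)

/-- Proposition 2.6: for `a,b,c,d` in the positive cone of `G`:
(i) if `a < c` the equation `(a,b) = (c,d)·(x,y)` has no solutions in `𝓑⁺(G)`;
(ii) if `a > c` it has the unique solution `(x,y) = (a·c⁻¹·d, b)` in `𝓑⁺(G)`;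
(iii) if `b < d` the equation `(a,b) = (x,y)·(c,d)` has no solutions in `𝓑⁺(G)`;
(iv) if `b > d` it has the unique solution `(x,y) = (a, b·d⁻¹·c)` in `𝓑⁺(G)`. -/
theorem solutions_pos {G : Type*} [Group G] [LinearOrder G]
    [CovariantClass G G (· * ·) (· ≤ ·)]
    [CovariantClass G G (Function.swap (· * ·)) (· ≤ ·)]
    (a b c d : G) (ha : 1 ≤ a) (hb : 1 ≤ b) (hc : 1 ≤ c) (hd : 1 ≤ d) :
    (a < c → ∀ x y : G, 1 ≤ x → 1 ≤ y → (a, b) ≠ bmul (c, d) (x, y)) ∧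
    (c < a → 1 ≤ a * c⁻¹ * d ∧
      ∀ x y : G, 1 ≤ x → 1 ≤ y →
        ((a, b) = bmul (c, d) (x, y) ↔ x = a * c⁻¹ * d ∧ y = b)) ∧
    (b < d → ∀ x y : G, 1 ≤ x → 1 ≤ y → (a, b) ≠ bmul (x, y) (c, d)) ∧
    (d < b → 1 ≤ b * d⁻¹ * c ∧
      ∀ x y : G, 1 ≤ x → 1 ≤ y →
        ((a, b) = bmul (x, y) (c, d) ↔ x = a ∧ y = b * d⁻¹ * c)) := by
  refine ⟨?_, ?_, ?_, ?_⟩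
  · intro hac x y hx hy h
    simp only [bmul] at h
    split_ifs at h with h1 h2 <;> simp only [Prod.mk.injEq] at h
    · have : c ≤ a := by
        rw [h.1]
        exact le_mul_of_one_le_left' (by simpa using h1.le)
      exact absurd hac (not_lt.mpr this)
    · exact absurd (h.1 ▸ hac) (lt_irrefl c)
    · exact absurd (h.1 ▸ hac) (lt_irrefl c)
  · intro hca
    have h1 : 1 < a * c⁻¹ := by simpa using hca
    refine ⟨le_trans hd (le_mul_of_one_le_left' h1.le), ?_⟩
    intro x y hx hy
    constructor
    · intro h
      simp only [bmul] at h
      split_ifs at h with hh1 hh2 <;> simp only [Prod.mk.injEq] at h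
      · refine ⟨?_, h.2.symm⟩
        rw [h.1]; group
      · exact absurd (h.1 ▸ hca) (lt_irrefl c)
      · exact absurd (h.1 ▸ hca) (lt_irrefl c)
    · rintro ⟨rfl, rfl⟩
      have hdx : d < a * c⁻¹ * d := by
        calc d = 1 * d := (one_mul d).symm
        _ < a * c⁻¹ * d := mul_lt_mul_left h1 d
      simp only [bmul, hdx, if_pos, Prod.mk.injEq]
      refine ⟨by group, ?_⟩ <;> trivial
  · intro hbd x y hx hy h
    simp only [bmul] at h
    split_ifs at h with h1 h2 <;> simp only [Prod.mk.injEq] at h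
    · exact absurd (h.2 ▸ hbd) (lt_irrefl d)
    · exact absurd (h.2 ▸ hbd) (lt_irrefl d)
    · have hcy : c < y := lt_of_le_of_ne (not_lt.mp h1) (Ne.symm h2)
      have : d ≤ b := by
        rw [h.2]
        exact le_mul_of_one_le_left' (by simpa using hcy.le)
      exact absurd hbd (not_lt.mpr this)
  · intro hdb
    have h1 : 1 < b * d⁻¹ := by simpa using hdb
    refine ⟨le_trans hc (le_mul_of_one_le_left' h1.le), ?_⟩
    intro x y hx hy
    constructor
    · intro h
      simp only [bmul] at h
      split_ifs at h with hh1 hh2 <;> simp only [Prod.mk.injEq] at h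
      · exact absurd (h.2 ▸ hdb) (lt_irrefl d)
      · exact absurd (h.2 ▸ hdb) (lt_irrefl d)
      · refine ⟨h.1.symm, ?_⟩
        rw [h.2]; group
    · rintro ⟨rfl, rfl⟩
      have hcy : c < b * d⁻¹ * c := by
        calc c = 1 * c := (one_mul c).symm
        _ < b * d⁻¹ * c := mul_lt_mul_left h1 c
      have hne : ¬ (b * d⁻¹ * c < c) := not_lt.mpr hcy.le
      have hne2 : ¬ (b * d⁻¹ * c = c) := ne_of_gt hcy
      simp only [bmul, hne, hne2, if_neg, Prod.mk.injEq]
      simp
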